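/- If k11(η) ≠ 0, then M0plus(α) = 0 and M0minus(−α) = 0; that is, the scaled torque produced by a sail panel vanishes exactly at the switching angle where that panel becomes edge-on to the sunlight. -/

import Mathlib

open Real

/-- Solar-radiation-pressure torque coefficient `k11`. -/
noncomputable def k11 (w mb ms d α η : ℝ) : ℝ :=
  Real.sin α * (2 * d * mb * (2 * η * Real.cos (2 * α) + η + 1) +
    w * (mb + ms) * (Real.cos α - η * Real.cos (3 * α)))

/-- Torque coefficient `k20`. -/
noncomputable def k20 (w mb ms d α η : ℝ) : ℝ :=
  Real.sin α ^ 2 * (4 * d * η * mb * Real.cos α +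
    w * (mb + ms) * (1 - η * Real.cos (2 * α)))

/-- Torque coefficient `k02`. -/
noncomputable def k02 (w mb ms d α η : ℝ) : ℝ :=
  Real.cos α * (2 * d * mb * (η * Real.cos (2 * α) + 1) +
    η * w * (mb + ms) * Real.sin α * Real.sin (2 * α))

/-- Scaled torque produced by panel `P₊`. -/
noncomputable def M0plus (w mb ms d α η : ℝ) (ψ : ℝ) : ℝ :=
  -(1 / 2) * Real.sin (2 * ψ)
    + (k20 w mb ms d α η / k11 w mb ms d α η) * Real.cos ψ ^ 2
    + (k02 w mb ms d α η / k11 w mb ms d α η) * Real.sin ψ ^ 2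

/-- Scaled torque produced by panel `P₋`. -/
noncomputable def M0minus (w mb ms d α η : ℝ) (ψ : ℝ) : ℝ :=
  -(1 / 2) * Real.sin (2 * ψ)
    - (k20 w mb ms d α η / k11 w mb ms d α η) * Real.cos ψ ^ 2
    - (k02 w mb ms d α η / k11 w mb ms d α η) * Real.sin ψ ^ 2

/-- Piecewise scaled torque `M1`. -/
noncomputable def M1 (w mb ms d α η : ℝ) (ψ : ℝ) : ℝ :=
  Set.indicator (Set.Icc (-α) (Real.pi - α)) (M0minus w mb ms d α η) ψ +
  Set.indicator (Set.Icc (-Real.pi + α) α) (M0plus w mb ms d α η) ψ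

theorem stmt5 (w mb ms d α η : ℝ) (hw : 0 < w) (hmb : 0 < mb) (hms : 0 < ms)
    (hα : α ∈ Set.Ioo 0 (π / 2)) (hη : η ∈ Set.Ioo (0:ℝ) 1)
    (hk : k11 w mb ms d α η ≠ 0) :
    M0plus w mb ms d α η α = 0 ∧ M0minus w mb ms d α η (-α) = 0 := by
  have hsq : Real.sin α ^ 2 = 1 - Real.cos α ^ 2 := Real.sin_sq α
  have key : k20 w mb ms d α η * Real.cos α ^ 2 + k02 w mb ms d α η * Real.sin α ^ 2
      = 1 / 2 * Real.sin (2 * α) * k11 w mb ms d α η := by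
    have h2 : Real.cos (2 * α) = 2 * Real.cos α ^ 2 - 1 := Real.cos_two_mul α
    have h3 : Real.cos (3 * α) = 4 * Real.cos α ^ 3 - 3 * Real.cos α := Real.cos_three_mul α
    have hs2 : Real.sin (2 * α) = 2 * Real.sin α * Real.cos α := Real.sin_two_mul α
    simp only [k20, k02, k11, h2, h3, hs2]
    ring_nf
    simp only [show Real.sin α ^ 4 = (1 - Real.cos α ^ 2) ^ 2 by rw [show (4:ℕ) = 2*2 from rfl, pow_mul, hsq], hsq]
    ring
  have key' : k20 w mb ms d α η / k11 w mb ms d α η * Real.cos α ^ 2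
      + k02 w mb ms d α η / k11 w mb ms d α η * Real.sin α ^ 2 = 1 / 2 * Real.sin (2 * α) := by
    rw [div_mul_eq_mul_div, div_mul_eq_mul_div, ← add_div, key,
      mul_div_assoc, div_self hk, mul_one]
  constructor
  · simp only [M0plus]
    linarith [key']
  · simp only [M0minus, neg_mul, Real.sin_neg, Real.cos_neg, neg_neg, neg_sq, mul_neg]
    linarith [key']
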